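/- Let (ν_i) be a sequence of strictly aperiodic probability measures on ℤ such that E(ν_i) = 0 for all i, there is a constant B with ∑_{i=1}^n m₂(ν_i)² ≤ B·n for all n, and there exist a constant C > 0 and an integer N₀ > 0 such that |ν̂_n(t)| ≤ e^{−Ct²} for all n > N₀ and all t ∈ [−1/2, 1/2). Let μ_n = ν₁ * … * ν_n. Then there is a constant C' such that for every k ≥ 1, every pair of integers n, n+1 with 4^{k−1} ≤ n < n + 1 ≤ 4^k, and every t ∈ [−1/2, 1/2), we have |μ̂_n(t) − μ̂_{n+1}(t)| ≤ C' · m₂(ν_{n+1}) / 4^k. -/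

import Mathlib

open scoped ENNReal NNReal BigOperators
open MeasureTheory

noncomputable section

/-- A probability measure on ℤ, viewed as a nonnegative function summing to 1. -/
def IsProbZ (ν : ℤ → ℝ) : Prop := (∀ k, 0 ≤ ν k) ∧ HasSum ν 1

/-- Fourier transform of a measure on ℤ: ν̂(t) = ∑ₖ ν(k) e^{-2πikt}. -/
def fourierZ (ν : ℤ → ℝ) (t : ℝ) : ℂ :=
  ∑' k : ℤ, (ν k : ℂ) * Complex.exp ((-2 * (Real.pi : ℂ) * Complex.I) * (k : ℂ) * (t : ℂ))

/-- p-th moment of a measure on ℤ. -/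
def moment (p : ℝ) (ν : ℤ → ℝ) : ℝ := ∑' k : ℤ, |(k : ℝ)| ^ p * ν k

/-- ν is strictly aperiodic: its support is not contained in any coset of a
proper subgroup of ℤ. -/
def StrictlyAperiodic (ν : ℤ → ℝ) : Prop :=
  ¬ ∃ (H : AddSubgroup ℤ) (a : ℤ), H ≠ ⊤ ∧ ∀ k, ν k ≠ 0 → k - a ∈ H

/-- Convolution of two measures on ℤ. -/
def convZ (ν₁ ν₂ : ℤ → ℝ) : ℤ → ℝ := fun k => ∑' j : ℤ, ν₁ j * ν₂ (k - j)

/-- `convProd ν n = ν 1 * ⋯ * ν n` (convolution product), with `convProd ν 0 = δ₀`. -/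
def convProd (ν : ℕ → ℤ → ℝ) : ℕ → ℤ → ℝ
  | 0 => fun k => if k = 0 then 1 else 0
  | n + 1 => convZ (convProd ν n) (ν (n + 1))

/-- Variation ρ-norm of a sequence of reals over an index set `I ⊆ ℕ`:
the sup over nondecreasing sequences with values in `I` of
`(∑ⱼ |x_{n(j)} - x_{n(j+1)}|^ρ)^{1/ρ}`, valued in `ℝ≥0∞`. -/
def vNorm (ρ : ℝ) (I : Set ℕ) (x : ℕ → ℝ) : ℝ≥0∞ :=
  ⨆ (n : ℕ → ℕ) (_ : Monotone n) (_ : ∀ j, n j ∈ I),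
    (∑' j : ℕ, (ENNReal.ofReal |x (n j) - x (n (j + 1))|) ^ ρ) ^ (1 / ρ)

/-- Oscillation s-norm of a sequence of reals relative to the increasing
sequence `nk` of indices. -/
def oNorm (s : ℝ) (nk : ℕ → ℕ) (x : ℕ → ℝ) : ℝ≥0∞ :=
  (∑' k : ℕ,
    (⨆ (n : ℕ) (_ : nk k ≤ n ∧ n ≤ nk (k + 1)), ENNReal.ofReal |x n - x (nk k)|) ^ s) ^ (1 / s)

/-- Action of a measure on ℤ on a function via a (bi-)measure-preserving map:
`μ f (x) = ∑ⱼ μ(j) f(T^j x)`. -/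
def act {X : Type*} (T : Equiv.Perm X) (μ : ℤ → ℝ) (f : X → ℝ) (x : X) : ℝ :=
  ∑' j : ℤ, μ j * f ((T ^ j) x)

end

noncomputable section
namespace KFIBAux

noncomputable def ec (t : ℝ) (k : ℤ) : ℂ :=
  Complex.exp ((-2 * (Real.pi : ℂ) * Complex.I) * (k : ℂ) * (t : ℂ))

lemma ec_eq (t : ℝ) (k : ℤ) :
    ec t k = Complex.exp (((-2 * Real.pi * k * t : ℝ) : ℂ) * Complex.I) := by
  unfold ec; congr 1; push_cast; ring

lemma abs_ec (t : ℝ) (k : ℤ) : ‖ec t k‖ = 1 := by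
  rw [ec_eq]; exact Complex.norm_exp_ofReal_mul_I _

lemma ec_add (t : ℝ) (j m : ℤ) : ec t (j + m) = ec t j * ec t m := by
  unfold ec; rw [← Complex.exp_add]; congr 1; push_cast; ring

lemma ec_zero (t : ℝ) : ec t 0 = 1 := by
  unfold ec; simp

lemma fourierZ_eq (ν : ℤ → ℝ) (t : ℝ) : fourierZ ν t = ∑' k : ℤ, (ν k : ℂ) * ec t k := rfl

lemma norm_term (ν : ℤ → ℝ) (h : ∀ k, 0 ≤ ν k) (t : ℝ) (k : ℤ) :
    ‖(ν k : ℂ) * ec t k‖ = ν k := by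
  rw [norm_mul, Complex.norm_real, Real.norm_eq_abs, abs_ec,
    mul_one, abs_of_nonneg (h k)]

lemma summable_fourier (ν : ℤ → ℝ) (hν : IsProbZ ν) (t : ℝ) :
    Summable fun k : ℤ => (ν k : ℂ) * ec t k := by
  refine Summable.of_norm ?_
  simpa only [norm_term ν hν.1 t] using hν.2.summable

lemma hasSum_fourier (ν : ℤ → ℝ) (hν : IsProbZ ν) (t : ℝ) :
    HasSum (fun k : ℤ => (ν k : ℂ) * ec t k) (fourierZ ν t) := by
  rw [fourierZ_eq]; exact (summable_fourier ν hν t).hasSum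

lemma abs_fourier_le_one (ν : ℤ → ℝ) (hν : IsProbZ ν) (t : ℝ) :
    ‖fourierZ ν t‖ ≤ 1 := by
  rw [fourierZ_eq]
  calc ‖∑' k : ℤ, (ν k : ℂ) * ec t k‖ ≤ ∑' k : ℤ, ‖(ν k : ℂ) * ec t k‖ :=
        norm_tsum_le_tsum_norm (by simpa only [norm_term ν hν.1 t] using hν.2.summable)
    _ = ∑' k : ℤ, ν k := by simp only [norm_term ν hν.1 t]
    _ = 1 := hν.2.tsum_eq

def shear : ℤ × ℤ ≃ ℤ × ℤ where
  toFun p := (p.1 + p.2, p.1)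
  invFun p := (p.2, p.1 - p.2)
  left_inv p := by simp
  right_inv p := by simp

lemma summable_conv_pair {μ ν : ℤ → ℝ} (hμ : IsProbZ μ) (hν : IsProbZ ν) :
    Summable fun p : ℤ × ℤ => μ p.2 * ν (p.1 - p.2) := by
  rw [← shear.summable_iff]
  have : ((fun p : ℤ × ℤ => μ p.2 * ν (p.1 - p.2)) ∘ shear) =
      fun p : ℤ × ℤ => μ p.1 * ν p.2 := by
    funext p; simp [shear]
  rw [this]
  exact hμ.2.summable.mul_of_nonneg hν.2.summable hμ.1 hν.1

lemma hasSum_conv_pair {μ ν : ℤ → ℝ} (hμ : IsProbZ μ) (hν : IsProbZ ν) :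
    HasSum (fun p : ℤ × ℤ => μ p.2 * ν (p.1 - p.2)) 1 := by
  rw [← shear.hasSum_iff]
  have : ((fun p : ℤ × ℤ => μ p.2 * ν (p.1 - p.2)) ∘ shear) =
      fun p : ℤ × ℤ => μ p.1 * ν p.2 := by
    funext p; simp [shear]
  rw [this]
  simpa using hμ.2.mul hν.2
    (hμ.2.summable.mul_of_nonneg hν.2.summable hμ.1 hν.1)

lemma isProbZ_conv {μ ν : ℤ → ℝ} (hμ : IsProbZ μ) (hν : IsProbZ ν) :
    IsProbZ (convZ μ ν) := by
  constructor
  · intro k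
    exact tsum_nonneg fun j => mul_nonneg (hμ.1 j) (hν.1 (k - j))
  · exact (hasSum_conv_pair hμ hν).prod_fiberwise fun k =>
      ((summable_conv_pair hμ hν).prod_factor k).hasSum


set_option maxHeartbeats 400000 in
lemma hasSum_pair_fourier {μ ν : ℤ → ℝ} (hμ : IsProbZ μ) (hν : IsProbZ ν) (t : ℝ) :
    HasSum (fun p : ℤ × ℤ => ((μ p.2 : ℂ) * (ν (p.1 - p.2) : ℂ)) * ec t p.1)
      (fourierZ μ t * fourierZ ν t) := by
  rw [← shear.hasSum_iff]
  have hsummable : Summable fun p : ℤ × ℤ => ((μ p.1 : ℂ) * ec t p.1) * ((ν p.2 : ℂ) * ec t p.2) := by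
    refine Summable.of_norm ?_
    have : (fun p : ℤ × ℤ => ‖((μ p.1 : ℂ) * ec t p.1) * ((ν p.2 : ℂ) * ec t p.2)‖) =
        fun p : ℤ × ℤ => μ p.1 * ν p.2 := by
      funext p; rw [norm_mul, norm_term μ hμ.1, norm_term ν hν.1]
    rw [this]
    exact hμ.2.summable.mul_of_nonneg hν.2.summable hμ.1 hν.1
  have hmul := (hasSum_fourier μ hμ t).mul (hasSum_fourier ν hν t) hsummable
  have heq : ((fun p : ℤ × ℤ => ((μ p.2 : ℂ) * (ν (p.1 - p.2) : ℂ)) * ec t p.1) ∘ shear) =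
      fun p : ℤ × ℤ => ((μ p.1 : ℂ) * ec t p.1) * ((ν p.2 : ℂ) * ec t p.2) := by
    funext p
    simp only [Function.comp_apply, shear, Equiv.coe_fn_mk, add_sub_cancel_left]
    rw [ec_add]; ring
  rw [heq]
  exact hmul

lemma fourier_conv {μ ν : ℤ → ℝ} (hμ : IsProbZ μ) (hν : IsProbZ ν) (t : ℝ) :
    fourierZ (convZ μ ν) t = fourierZ μ t * fourierZ ν t := by
  have hfib : ∀ k : ℤ, HasSum (fun j : ℤ => ((μ j : ℂ) * (ν (k - j) : ℂ)) * ec t k)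
      ((convZ μ ν k : ℂ) * ec t k) := by
    intro k
    have h1 : HasSum (fun j : ℤ => μ j * ν (k - j)) (convZ μ ν k) :=
      ((summable_conv_pair hμ hν).prod_factor k).hasSum
    have h2 := (Complex.hasSum_ofReal.mpr h1).mul_right (ec t k)
    have heq : (fun j : ℤ => ((μ j : ℂ) * (ν (k - j) : ℂ)) * ec t k) =
        fun j : ℤ => ((μ j * ν (k - j) : ℝ) : ℂ) * ec t k := by
      funext j; push_cast; ring
    rw [heq]; exact h2
  have := (hasSum_pair_fourier hμ hν t).prod_fiberwise hfib
  rw [fourierZ_eq]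
  exact this.tsum_eq

lemma isProbZ_convProd (ν : ℕ → ℤ → ℝ) (h : ∀ i, 1 ≤ i → IsProbZ (ν i)) :
    ∀ n, IsProbZ (convProd ν n) := by
  intro n
  induction n with
  | zero =>
    constructor
    · intro k; dsimp [convProd]; split <;> norm_num
    · exact hasSum_ite_eq 0 1
  | succ n ih => exact isProbZ_conv ih (h (n + 1) (Nat.le_add_left 1 n))

lemma fourier_convProd_zero (ν : ℕ → ℤ → ℝ) (t : ℝ) :
    fourierZ (convProd ν 0) t = 1 := by
  rw [fourierZ_eq, tsum_eq_single 0 (by intro k hk; simp [convProd, hk])]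
  simp [convProd, ec_zero]

lemma fourier_convProd_eq_prod (ν : ℕ → ℤ → ℝ) (h : ∀ i, 1 ≤ i → IsProbZ (ν i)) (t : ℝ) :
    ∀ n, fourierZ (convProd ν n) t = ∏ i ∈ Finset.Icc 1 n, fourierZ (ν i) t := by
  intro n
  induction n with
  | zero => simp [fourier_convProd_zero]
  | succ n ih =>
    have : convProd ν (n + 1) = convZ (convProd ν n) (ν (n + 1)) := rfl
    rw [this, fourier_conv (isProbZ_convProd ν h n) (h (n + 1) (Nat.le_add_left 1 n)) t, ih,
      Finset.prod_Icc_succ_top (Nat.le_add_left 1 n)]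

lemma exp_I_taylor (θ : ℝ) :
    ‖Complex.exp ((θ : ℂ) * Complex.I) - 1 - (θ : ℂ) * Complex.I‖ ≤ 3 * θ ^ 2 := by
  have h3 : ‖(θ : ℂ) * Complex.I‖ = |θ| := by
    rw [norm_mul, Complex.norm_I, mul_one, Complex.norm_real, Real.norm_eq_abs]
  by_cases h : |θ| ≤ 1
  · have h1 : ‖(θ : ℂ) * Complex.I‖ ≤ 1 := by
      rwa [h3]
    have h2 := Complex.norm_exp_sub_one_sub_id_le h1
    have h4 : ‖(θ : ℂ) * Complex.I‖ = |θ| := by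
      exact h3
    rw [h4] at h2
    nlinarith [sq_abs θ, sq_nonneg θ]
  · push_neg at h
    have h2 : ‖Complex.exp ((θ : ℂ) * Complex.I) - 1‖ ≤ 2 := by
      refine (norm_sub_le _ _).trans ?_
      rw [Complex.norm_exp_ofReal_mul_I]
      norm_num
    have h1 := norm_sub_le (Complex.exp ((θ : ℂ) * Complex.I) - 1) ((θ : ℂ) * Complex.I)
    rw [h3] at h1
    nlinarith [sq_abs θ, abs_nonneg θ]

lemma moment_two_eq (ν : ℤ → ℝ) : moment 2 ν = ∑' k : ℤ, (k : ℝ) ^ 2 * ν k := by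
  unfold moment
  exact tsum_congr fun k => by rw [Real.rpow_two, sq_abs]

lemma summable_sq (ν : ℤ → ℝ) (hm : Summable fun k : ℤ => |(k : ℝ)| ^ (2 : ℝ) * ν k) :
    Summable fun k : ℤ => (k : ℝ) ^ 2 * ν k := by
  refine hm.congr fun k => ?_
  rw [Real.rpow_two, sq_abs]

lemma moment_two_nonneg (ν : ℤ → ℝ) (h : ∀ k, 0 ≤ ν k) : 0 ≤ moment 2 ν := by
  unfold moment
  exact tsum_nonneg fun k => mul_nonneg (by positivity) (h k)

lemma abs_one_sub_fourier (ν : ℤ → ℝ) (hν : IsProbZ ν)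
    (hm : Summable fun k : ℤ => |(k : ℝ)| ^ (2 : ℝ) * ν k)
    (hz : HasSum (fun k : ℤ => (k : ℝ) * ν k) 0) (t : ℝ) :
    ‖1 - fourierZ ν t‖ ≤ 12 * Real.pi ^ 2 * t ^ 2 * moment 2 ν := by
  set π := Real.pi with hπ
  have hm' := summable_sq ν hm
  have h1 : HasSum (fun k : ℤ => ((ν k : ℝ) : ℂ)) 1 := Complex.hasSum_ofReal.mpr hν.2
  have h2 := hasSum_fourier ν hν t
  have h3 : HasSum (fun k : ℤ => (ν k : ℂ) * (((-2 * π * k * t : ℝ) : ℂ) * Complex.I)) 0 := by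
    have h := (Complex.hasSum_ofReal.mpr hz).mul_left ((((-2 * π * t : ℝ)) : ℂ) * Complex.I)
    simp only [Complex.ofReal_zero, mul_zero] at h
    have heq : (fun k : ℤ => ((((-2 * π * t : ℝ)) : ℂ) * Complex.I) * (((k : ℝ) * ν k : ℝ) : ℂ)) =
        fun k : ℤ => (ν k : ℂ) * (((-2 * π * k * t : ℝ) : ℂ) * Complex.I) := by
      funext k; push_cast; ring
    rwa [heq] at h
  have hsum : HasSum
      (fun k : ℤ => (ν k : ℂ) * (1 - ec t k + ((-2 * π * k * t : ℝ) : ℂ) * Complex.I))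
      (1 - fourierZ ν t) := by
    have h := (h1.sub h2).add h3
    rw [add_zero] at h
    have heq : (fun k : ℤ => ((((ν k : ℝ)) : ℂ) - (ν k : ℂ) * ec t k) +
        (ν k : ℂ) * (((-2 * π * k * t : ℝ) : ℂ) * Complex.I)) =
        fun k : ℤ => (ν k : ℂ) * (1 - ec t k + ((-2 * π * k * t : ℝ) : ℂ) * Complex.I) := by
      funext k; ring
    rwa [heq] at h
  have hbound : ∀ k : ℤ, ‖(ν k : ℂ) * (1 - ec t k + ((-2 * π * k * t : ℝ) : ℂ) * Complex.I)‖ ≤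
      12 * π ^ 2 * t ^ 2 * ((k : ℝ) ^ 2 * ν k) := by
    intro k
    rw [norm_mul, Complex.norm_real, Real.norm_eq_abs, abs_of_nonneg (hν.1 k)]
    have habs : ‖1 - ec t k + ((-2 * π * k * t : ℝ) : ℂ) * Complex.I‖ ≤
        3 * (-2 * π * k * t) ^ 2 := by
      rw [ec_eq]
      have heq : (1 : ℂ) - Complex.exp (((-2 * π * k * t : ℝ) : ℂ) * Complex.I) +
          ((-2 * π * k * t : ℝ) : ℂ) * Complex.I =
          -(Complex.exp (((-2 * π * k * t : ℝ) : ℂ) * Complex.I) - 1 -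
            ((-2 * π * k * t : ℝ) : ℂ) * Complex.I) := by ring
      rw [heq, norm_neg]
      exact exp_I_taylor (-2 * π * k * t)
    calc ν k * ‖1 - ec t k + ((-2 * π * k * t : ℝ) : ℂ) * Complex.I‖ ≤
        ν k * (3 * (-2 * π * k * t) ^ 2) := by
          exact mul_le_mul_of_nonneg_left habs (hν.1 k)
      _ = 12 * π ^ 2 * t ^ 2 * ((k : ℝ) ^ 2 * ν k) := by ring
  have hbsum : Summable fun k : ℤ => 12 * π ^ 2 * t ^ 2 * ((k : ℝ) ^ 2 * ν k) :=
    hm'.mul_left _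
  have hnormsum : Summable fun k : ℤ =>
      ‖(ν k : ℂ) * (1 - ec t k + ((-2 * π * k * t : ℝ) : ℂ) * Complex.I)‖ :=
    Summable.of_nonneg_of_le (fun k => norm_nonneg _) hbound hbsum
  calc ‖1 - fourierZ ν t‖
      = ‖∑' k : ℤ, (ν k : ℂ) * (1 - ec t k + ((-2 * π * k * t : ℝ) : ℂ) * Complex.I)‖ := by
        rw [hsum.tsum_eq]
    _ ≤ ∑' k : ℤ, ‖(ν k : ℂ) * (1 - ec t k + ((-2 * π * k * t : ℝ) : ℂ) * Complex.I)‖ :=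
        norm_tsum_le_tsum_norm hnormsum
    _ ≤ ∑' k : ℤ, 12 * π ^ 2 * t ^ 2 * ((k : ℝ) ^ 2 * ν k) :=
        Summable.tsum_le_tsum hbound hnormsum hbsum
    _ = 12 * π ^ 2 * t ^ 2 * ∑' k : ℤ, (k : ℝ) ^ 2 * ν k := tsum_mul_left
    _ = 12 * π ^ 2 * t ^ 2 * moment 2 ν := by rw [moment_two_eq]

lemma sq_mul_exp_neg_le {a : ℝ} (ha : 0 < a) (t : ℝ) :
    t ^ 2 * Real.exp (-(a * t ^ 2)) ≤ 1 / a := by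
  rcases eq_or_ne t 0 with h | h
  · simp [h]; positivity
  · have h2 : 0 < a * t ^ 2 := by positivity
    have h3 : Real.exp (-(a * t ^ 2)) ≤ 1 / (a * t ^ 2) := by
      rw [Real.exp_neg, one_div]
      exact inv_anti₀ h2 (by linarith [Real.add_one_le_exp (a * t ^ 2)])
    calc t ^ 2 * Real.exp (-(a * t ^ 2)) ≤ t ^ 2 * (1 / (a * t ^ 2)) :=
          mul_le_mul_of_nonneg_left h3 (sq_nonneg t)
      _ = 1 / a := by
          field_simp

lemma abs_fourier_convProd_le (ν : ℕ → ℤ → ℝ) (hprob : ∀ i, 1 ≤ i → IsProbZ (ν i))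
    (t : ℝ) (C : ℝ) (N₀ n : ℕ) (hn : N₀ ≤ n)
    (hfour : ∀ i, N₀ < i → i ≤ n → ‖fourierZ (ν i) t‖ ≤ Real.exp (-C * t ^ 2)) :
    ‖fourierZ (convProd ν n) t‖ ≤
      Real.exp (-(C * ((n - N₀ : ℕ) : ℝ) * t ^ 2)) := by
  rw [fourier_convProd_eq_prod ν hprob t n, norm_prod]
  have hIcc : Finset.Icc 1 n = Finset.Ioc 0 n := Finset.Icc_add_one_left_eq_Ioc 0 n
  rw [hIcc]
  have h1 : ∏ i ∈ Finset.Ioc 0 N₀, ‖fourierZ (ν i) t‖ ≤ 1 :=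
    Finset.prod_le_one (fun i _ => norm_nonneg _)
      (fun i hi => abs_fourier_le_one (ν i) (hprob i (Finset.mem_Ioc.mp hi).1) t)
  have h2 : ∏ i ∈ Finset.Ioc N₀ n, ‖fourierZ (ν i) t‖ ≤
      Real.exp (-C * t ^ 2) ^ (n - N₀) := by
    calc ∏ i ∈ Finset.Ioc N₀ n, ‖fourierZ (ν i) t‖
        ≤ ∏ _i ∈ Finset.Ioc N₀ n, Real.exp (-C * t ^ 2) :=
          Finset.prod_le_prod (fun i _ => norm_nonneg _)
            (fun i hi => hfour i (Finset.mem_Ioc.mp hi).1 (Finset.mem_Ioc.mp hi).2)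
      _ = Real.exp (-C * t ^ 2) ^ (n - N₀) := by
          rw [Finset.prod_const, Nat.card_Ioc]
  calc ∏ i ∈ Finset.Ioc 0 n, ‖fourierZ (ν i) t‖
      = (∏ i ∈ Finset.Ioc 0 N₀, ‖fourierZ (ν i) t‖) *
        ∏ i ∈ Finset.Ioc N₀ n, ‖fourierZ (ν i) t‖ :=
        (Finset.prod_Ioc_consecutive _ (Nat.zero_le N₀) hn).symm
    _ ≤ 1 * Real.exp (-C * t ^ 2) ^ (n - N₀) :=
        mul_le_mul h1 h2 (Finset.prod_nonneg fun i _ => norm_nonneg _) zero_le_one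
    _ = Real.exp (-(C * ((n - N₀ : ℕ) : ℝ) * t ^ 2)) := by
        rw [one_mul, ← Real.exp_nat_mul]
        congr 1
        ring


end KFIBAux

end

open KFIBAux in
/-- **Lemma 1.4.7(2).** For `4^{k-1} ≤ n < n+1 ≤ 4^k`,
`|μ̂ₙ(t) - μ̂_{n+1}(t)| ≤ C'·m₂(ν_{n+1})/4^k`. (Here the blocks are written as
`4^k ≤ n < n+1 ≤ 4^{k+1}`, i.e. the paper's `k` is `k + 1`.) -/
theorem kernel_fourier_increment_bound
    (ν : ℕ → ℤ → ℝ)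
    (hprob : ∀ i, 1 ≤ i → IsProbZ (ν i))
    (haper : ∀ i, 1 ≤ i → StrictlyAperiodic (ν i))
    (hmom : ∀ i, 1 ≤ i → Summable (fun k : ℤ => |(k : ℝ)| ^ (2 : ℝ) * ν i k))
    (hexp : ∀ i, 1 ≤ i → HasSum (fun k : ℤ => (k : ℝ) * ν i k) 0)
    (B : ℝ) (hB : ∀ n : ℕ, 1 ≤ n → ∑ i ∈ Finset.Icc 1 n, (moment 2 (ν i)) ^ 2 ≤ B * n)
    (C : ℝ) (hC : 0 < C) (N₀ : ℕ) (hN₀ : 0 < N₀)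
    (hfour : ∀ n, N₀ < n → ∀ t ∈ Set.Ico (-(1 : ℝ)/2) (1/2),
      ‖fourierZ (ν n) t‖ ≤ Real.exp (-C * t ^ 2))
    (μ : ℕ → ℤ → ℝ) (hμ : μ = convProd ν) :
    ∃ C' : ℝ, 0 ≤ C' ∧ ∀ k : ℕ, ∀ n : ℕ, 4 ^ k ≤ n → n + 1 ≤ 4 ^ (k + 1) →
      ∀ t ∈ Set.Ico (-(1 : ℝ)/2) (1/2),
        ‖fourierZ (μ n) t - fourierZ (μ (n + 1)) t‖ ≤
          C' * moment 2 (ν (n + 1)) / 4 ^ (k + 1) := by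
  subst hμ
  set π := Real.pi with hπdef
  have hπ : 0 < π := Real.pi_pos
  refine ⟨max (96 * π ^ 2 / C) (24 * π ^ 2 * N₀), le_max_of_le_left (by positivity), ?_⟩
  set C' := max (96 * π ^ 2 / C) (24 * π ^ 2 * N₀) with hC'def
  intro k n hk1 hk2 t ht
  have h4k1 : 1 ≤ 4 ^ k := Nat.one_le_pow k 4 (by norm_num)
  have hn1 : 1 ≤ n := le_trans h4k1 hk1
  have hprobn1 : IsProbZ (ν (n + 1)) := hprob (n + 1) (by omega)
  set M := moment 2 (ν (n + 1)) with hMdef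
  have hm2 : 0 ≤ M := moment_two_nonneg _ hprobn1.1
  have ht2 : t ^ 2 ≤ 1 / 4 := by
    obtain ⟨ht1, ht2⟩ := ht
    nlinarith
  have hpow : (0 : ℝ) < 4 ^ (k + 1) := by positivity
  have hpn : (4 : ℕ) ^ (k + 1) = 4 * 4 ^ k := by rw [pow_succ]; ring
  have hsub : fourierZ (convProd ν n) t - fourierZ (convProd ν (n + 1)) t
      = fourierZ (convProd ν n) t * (1 - fourierZ (ν (n + 1)) t) := by
    have h : fourierZ (convProd ν (n + 1)) t =
        fourierZ (convProd ν n) t * fourierZ (ν (n + 1)) t :=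
      fourier_conv (isProbZ_convProd ν hprob n) hprobn1 t
    rw [h]; ring
  rw [hsub, norm_mul]
  have hone : ‖1 - fourierZ (ν (n + 1)) t‖ ≤ 12 * π ^ 2 * t ^ 2 * M :=
    abs_one_sub_fourier (ν (n + 1)) hprobn1 (hmom (n + 1) (by omega))
      (hexp (n + 1) (by omega)) t
  have h12 : (0 : ℝ) ≤ 12 * π ^ 2 * M := by
    have : (0 : ℝ) ≤ 12 * π ^ 2 := by positivity
    exact mul_nonneg this hm2
  by_cases hbig : 2 * N₀ ≤ n
  · -- large n
    set m := n - N₀ with hmdef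
    have hmn : N₀ ≤ n := by omega
    have hm0 : 0 < m := by omega
    have hmR : (0 : ℝ) < (m : ℝ) := by exact_mod_cast hm0
    have hCm : 0 < C * (m : ℝ) := by positivity
    have hprod : ‖fourierZ (convProd ν n) t‖ ≤
        Real.exp (-(C * ((m : ℕ) : ℝ) * t ^ 2)) :=
      abs_fourier_convProd_le ν hprob t C N₀ n hmn (fun i hi _ => hfour i hi t ht)
    have step1 : ‖fourierZ (convProd ν n) t‖ *
        ‖1 - fourierZ (ν (n + 1)) t‖
        ≤ Real.exp (-(C * (m : ℝ) * t ^ 2)) * (12 * π ^ 2 * t ^ 2 * M) :=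
      mul_le_mul hprod hone (norm_nonneg _) (Real.exp_nonneg _)
    have hdecay := sq_mul_exp_neg_le hCm t
    have step2 : Real.exp (-(C * (m : ℝ) * t ^ 2)) * (12 * π ^ 2 * t ^ 2 * M)
        ≤ 12 * π ^ 2 * M * (1 / (C * (m : ℝ))) := by
      have heq : Real.exp (-(C * (m : ℝ) * t ^ 2)) * (12 * π ^ 2 * t ^ 2 * M)
          = 12 * π ^ 2 * M * (t ^ 2 * Real.exp (-(C * (m : ℝ) * t ^ 2))) := by ring
      rw [heq]
      refine mul_le_mul_of_nonneg_left ?_ h12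
      have heq2 : -(C * (m : ℝ) * t ^ 2) = -(C * (m : ℝ) * t ^ 2) := rfl
      exact hdecay
    have h4k : (4 : ℕ) ^ (k + 1) ≤ 8 * m := by omega
    have h4kR : (4 : ℝ) ^ (k + 1) ≤ 8 * (m : ℝ) := by exact_mod_cast h4k
    have hC'C : 96 * π ^ 2 ≤ C' * C := by
      have h := le_max_left (96 * π ^ 2 / C) (24 * π ^ 2 * N₀)
      rw [hC'def]
      calc 96 * π ^ 2 = 96 * π ^ 2 / C * C := by field_simp
        _ ≤ max (96 * π ^ 2 / C) (24 * π ^ 2 * ↑N₀) * C :=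
            mul_le_mul_of_nonneg_right h hC.le
    have step3 : 12 * π ^ 2 * M * (1 / (C * (m : ℝ))) ≤ C' * M / 4 ^ (k + 1) := by
      rw [mul_one_div, div_le_div_iff₀ hCm hpow]
      calc 12 * π ^ 2 * M * 4 ^ (k + 1) ≤ 12 * π ^ 2 * M * (8 * (m : ℝ)) :=
            mul_le_mul_of_nonneg_left h4kR h12
        _ = 96 * π ^ 2 * ((m : ℝ) * M) := by ring
        _ ≤ C' * C * ((m : ℝ) * M) :=
            mul_le_mul_of_nonneg_right hC'C (mul_nonneg hmR.le hm2)
        _ = C' * M * (C * (m : ℝ)) := by ring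
    calc ‖fourierZ (convProd ν n) t‖ * ‖1 - fourierZ (ν (n + 1)) t‖
        ≤ Real.exp (-(C * (m : ℝ) * t ^ 2)) * (12 * π ^ 2 * t ^ 2 * M) := step1
      _ ≤ 12 * π ^ 2 * M * (1 / (C * (m : ℝ))) := step2
      _ ≤ C' * M / 4 ^ (k + 1) := step3
  · -- small n
    push_neg at hbig
    have h4k : (4 : ℕ) ^ (k + 1) ≤ 8 * N₀ := by omega
    have h4kR : (4 : ℝ) ^ (k + 1) ≤ 8 * (N₀ : ℝ) := by exact_mod_cast h4k
    have hC'2 : 24 * π ^ 2 * (N₀ : ℝ) ≤ C' := le_max_right _ _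
    have step1 : ‖fourierZ (convProd ν n) t‖ *
        ‖1 - fourierZ (ν (n + 1)) t‖ ≤ 1 * (12 * π ^ 2 * t ^ 2 * M) :=
      mul_le_mul (abs_fourier_le_one _ (isProbZ_convProd ν hprob n) t) hone
        (norm_nonneg _) zero_le_one
    have step2 : 1 * (12 * π ^ 2 * t ^ 2 * M) ≤ 3 * π ^ 2 * M := by
      nlinarith [mul_le_mul_of_nonneg_left ht2 h12]
    have step3 : 3 * π ^ 2 * M ≤ C' * M / 4 ^ (k + 1) := by
      rw [le_div_iff₀ hpow]
      calc 3 * π ^ 2 * M * 4 ^ (k + 1) = 3 * π ^ 2 * 4 ^ (k + 1) * M := by ring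
        _ ≤ 24 * π ^ 2 * (N₀ : ℝ) * M := by
            refine mul_le_mul_of_nonneg_right ?_ hm2
            nlinarith
        _ ≤ C' * M := mul_le_mul_of_nonneg_right hC'2 hm2
    calc ‖fourierZ (convProd ν n) t‖ * ‖1 - fourierZ (ν (n + 1)) t‖
        ≤ 1 * (12 * π ^ 2 * t ^ 2 * M) := step1
      _ ≤ 3 * π ^ 2 * M := step2
      _ ≤ C' * M / 4 ^ (k + 1) := step3
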